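/- (Lemma 1, variance.) For all natural numbers b ≥ 1 and N ≥ b + 2, letting m = ∫₀^∞ N·log(1 + b x/(N−b−1)) f_{b, N−b−1}(x) dx, the quantity ∫₀^∞ (N·log(1 + b x/(N−b−1)))^2 f_{b, N−b−1}(x) dx − m^2 equals N^2 · (ψ′((N−b−1)/2) − ψ′((N−1)/2)). -/

import Mathlib

open MeasureTheory

/-- Digamma function `ψ(x) = d/dx log Γ(x)`. -/
noncomputable def digamma (x : ℝ) : ℝ :=
  deriv (fun y => Real.log (Real.Gamma y)) x

/-- Trigamma function `ψ′(x) = d²/dx² log Γ(x)`. -/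
noncomputable def trigamma (x : ℝ) : ℝ :=
  deriv (deriv (fun y => Real.log (Real.Gamma y))) x

/-- Density of the F-distribution with degrees of freedom `(a, b)`. -/
noncomputable def fDensity (a b x : ℝ) : ℝ :=
  (Real.Gamma ((a + b) / 2) / (Real.Gamma (a / 2) * Real.Gamma (b / 2))) *
    (a / b) ^ (a / 2) * x ^ (a / 2 - 1) * (1 + a * x / b) ^ (-((a + b) / 2))

open Set Filter Asymptotics

/-- The core integral family: `K q k s = ∫₀¹ (log t)^k t^(s-1) (1-t)^(q-1) dt`. -/
noncomputable def Kint (q : ℝ) (k : ℕ) (s : ℝ) : ℝ :=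
  ∫ t in Set.Ioo (0:ℝ) 1, (Real.log t) ^ k * t ^ (s - 1) * (1 - t) ^ (q - 1)

lemma neg_log_le {t δ : ℝ} (ht : 0 < t) (hδ : 0 < δ) :
    -Real.log t ≤ δ⁻¹ * t ^ (-δ) := by
  have h1 : Real.log (t ^ (-δ)) = -δ * Real.log t := Real.log_rpow ht _
  have h2 : Real.log (t ^ (-δ)) ≤ t ^ (-δ) - 1 :=
    Real.log_le_sub_one_of_pos (Real.rpow_pos_of_pos ht _)
  have h3 : -Real.log t = δ⁻¹ * Real.log (t ^ (-δ)) := by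
    rw [h1]; field_simp
  rw [h3]
  have : Real.log (t ^ (-δ)) ≤ t ^ (-δ) := h2.trans (by linarith)
  calc δ⁻¹ * Real.log (t ^ (-δ)) ≤ δ⁻¹ * t ^ (-δ) := by
        exact mul_le_mul_of_nonneg_left this (by positivity)

lemma abs_log_pow_le {t δ : ℝ} (ht : t ∈ Set.Ioo (0:ℝ) 1) (hδ : 0 < δ) (k : ℕ) :
    |Real.log t| ^ k ≤ δ⁻¹ ^ k * t ^ (-(δ * k)) := by
  have hlt : Real.log t < 0 := Real.log_neg ht.1 ht.2
  have h1 : |Real.log t| = -Real.log t := abs_of_neg hlt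
  have h2 : |Real.log t| ≤ δ⁻¹ * t ^ (-δ) := h1 ▸ neg_log_le ht.1 hδ
  calc |Real.log t| ^ k ≤ (δ⁻¹ * t ^ (-δ)) ^ k :=
        pow_le_pow_left₀ (abs_nonneg _) h2 k
    _ = δ⁻¹ ^ k * t ^ (-(δ * k)) := by
        rw [mul_pow, ← Real.rpow_natCast (t ^ (-δ)) k, ← Real.rpow_mul ht.1.le]
        ring_nf

lemma realBetaIntegrable {u q : ℝ} (hu : 0 < u) (hq : 0 < q) :
    IntegrableOn (fun t : ℝ => t ^ (u - 1) * (1 - t) ^ (q - 1)) (Set.Ioo 0 1) := by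
  have h := ((Complex.betaIntegral_convergent (u := u) (v := q) (by simpa) (by simpa)).norm)
  rw [intervalIntegrable_iff_integrableOn_Ioc_of_le zero_le_one] at h
  refine (h.mono_set Set.Ioo_subset_Ioc_self).congr_fun (fun t ht => ?_) measurableSet_Ioo
  have ht0 : (0:ℝ) < t := ht.1
  have ht1 : (0:ℝ) < 1 - t := by linarith [ht.2]
  have e1 : ((t:ℂ)) ^ ((u:ℂ) - 1) = ((t ^ (u-1) : ℝ) : ℂ) := by
    rw [Complex.ofReal_cpow ht0.le]; push_cast; ring_nf
  have e2 : ((1 - (t:ℂ))) ^ ((q:ℂ) - 1) = (((1-t) ^ (q-1) : ℝ) : ℂ) := by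
    have : (1 - (t:ℂ)) = ((1 - t : ℝ) : ℂ) := by push_cast; ring
    rw [this, Complex.ofReal_cpow ht1.le]; push_cast; ring_nf
  simp only [e1, e2, ← Complex.ofReal_mul, Complex.norm_real]
  rw [Real.norm_of_nonneg (by positivity)]

lemma contOn_integrand (q σ : ℝ) (k : ℕ) :
    ContinuousOn (fun t : ℝ => (Real.log t) ^ k * t ^ (σ - 1) * (1 - t) ^ (q - 1))
      (Set.Ioo 0 1) := by
  have h1 : ContinuousOn Real.log (Set.Ioo (0:ℝ) 1) :=
    Real.continuousOn_log.mono (fun t ht => by exact ne_of_gt ht.1)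
  have h2 : ContinuousOn (fun t : ℝ => t ^ (σ - 1)) (Set.Ioo 0 1) :=
    ContinuousOn.rpow_const continuousOn_id (fun t ht => Or.inl (ne_of_gt ht.1))
  have h3 : ContinuousOn (fun t : ℝ => (1 - t) ^ (q - 1)) (Set.Ioo 0 1) :=
    ContinuousOn.rpow_const (continuousOn_const.sub continuousOn_id)
      (fun t ht => Or.inl (by have := ht.2; intro h; linarith [sub_eq_zero.mp h]))
  exact ((h1.pow k).mul h2).mul h3

lemma intKey {q σ : ℝ} (hq : 0 < q) (hσ : 0 < σ) (k : ℕ) :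
    IntegrableOn (fun t : ℝ => |Real.log t| ^ k * t ^ (σ - 1) * (1 - t) ^ (q - 1))
      (Set.Ioo 0 1) := by
  set δ : ℝ := σ / (2 * (k + 1)) with hδdef
  have hδ : 0 < δ := by positivity
  have hδk : δ * k < σ := by
    rw [hδdef]
    rw [div_mul_eq_mul_div, div_lt_iff₀ (by positivity)]
    nlinarith [hσ]
  have hmaj : IntegrableOn
      (fun t : ℝ => δ⁻¹ ^ k * (t ^ (σ - δ * k - 1) * (1 - t) ^ (q - 1))) (Set.Ioo 0 1) := by
    refine Integrable.const_mul ?_ _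
    have := realBetaIntegrable (u := σ - δ * k) (by linarith) hq
    simpa [sub_sub, IntegrableOn] using this
  refine hmaj.mono' ?_ ?_
  · -- measurability
    have h1 : ContinuousOn Real.log (Set.Ioo (0:ℝ) 1) :=
      Real.continuousOn_log.mono (fun t ht => by exact ne_of_gt ht.1)
    have h2 : ContinuousOn (fun t : ℝ => t ^ (σ - 1)) (Set.Ioo 0 1) :=
      ContinuousOn.rpow_const continuousOn_id (fun t ht => Or.inl (ne_of_gt ht.1))
    have h3 : ContinuousOn (fun t : ℝ => (1 - t) ^ (q - 1)) (Set.Ioo 0 1) :=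
      ContinuousOn.rpow_const (continuousOn_const.sub continuousOn_id)
        (fun t ht => Or.inl (by have := ht.2; intro h; linarith [sub_eq_zero.mp h]))
    exact (((h1.abs.pow k).mul h2).mul h3).aestronglyMeasurable measurableSet_Ioo
  · refine (ae_restrict_iff' measurableSet_Ioo).2 (Filter.Eventually.of_forall fun t ht => ?_)
    have ht0 := ht.1
    have ht1 : (0:ℝ) < 1 - t := by linarith [ht.2]
    rw [Real.norm_of_nonneg (by positivity)]
    have hb := abs_log_pow_le ht hδ k
    calc |Real.log t| ^ k * t ^ (σ - 1) * (1 - t) ^ (q - 1)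
        ≤ (δ⁻¹ ^ k * t ^ (-(δ * k))) * t ^ (σ - 1) * (1 - t) ^ (q - 1) := by
          gcongr <;> positivity
      _ = δ⁻¹ ^ k * (t ^ (σ - δ * k - 1) * (1 - t) ^ (q - 1)) := by
          rw [mul_assoc (δ⁻¹ ^ k), ← Real.rpow_add ht0]
          ring_nf

lemma contOn_aux (q : ℝ) (k : ℕ) :
    ContinuousOn (fun t : ℝ => (Real.log t) ^ k * (1 - t) ^ (q - 1)) (Set.Ioo 0 1) := by
  have h1 : ContinuousOn Real.log (Set.Ioo (0:ℝ) 1) :=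
    Real.continuousOn_log.mono (fun t ht => by exact ne_of_gt ht.1)
  have h3 : ContinuousOn (fun t : ℝ => (1 - t) ^ (q - 1)) (Set.Ioo 0 1) :=
    ContinuousOn.rpow_const (continuousOn_const.sub continuousOn_id)
      (fun t ht => Or.inl (by have := ht.2; intro h; linarith [sub_eq_zero.mp h]))
  exact (h1.pow k).mul h3

noncomputable def gI (q : ℝ) (k : ℕ) : ℝ → ℝ :=
  Set.indicator (Set.Ioo 0 1) (fun t => (Real.log t) ^ k * (1 - t) ^ (q - 1))

noncomputable def fC (q : ℝ) (k : ℕ) : ℝ → ℂ := fun t => ((gI q k t : ℝ) : ℂ)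

lemma fC_succ (q : ℝ) (k : ℕ) : (fun t => Real.log t • fC q k t) = fC q (k + 1) := by
  funext t
  simp only [fC, gI, Complex.real_smul]
  by_cases h : t ∈ Set.Ioo (0:ℝ) 1
  · simp only [Set.indicator_of_mem h]; push_cast; ring
  · simp [Set.indicator_of_notMem h]

lemma gI_integrable {q : ℝ} (hq : 0 < q) (k : ℕ) : Integrable (gI q k) := by
  rw [gI, integrable_indicator_iff measurableSet_Ioo]
  refine ((intKey hq one_pos k).mono' ?_ ?_)
  · exact (contOn_aux q k).aestronglyMeasurable measurableSet_Ioo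
  · refine (ae_restrict_iff' measurableSet_Ioo).2 (Filter.Eventually.of_forall fun t ht => ?_)
    have ht1 : (0:ℝ) < 1 - t := by linarith [ht.2]
    have : ‖(Real.log t) ^ k * (1 - t) ^ (q - 1)‖ = |Real.log t| ^ k * (1 - t) ^ (q - 1) := by
      rw [Real.norm_eq_abs, abs_mul, abs_pow,
        abs_of_nonneg (le_of_lt (Real.rpow_pos_of_pos ht1 _))]
    rw [this, sub_self, Real.rpow_zero]
    exact le_of_eq (by ring)

lemma fC_integrable {q : ℝ} (hq : 0 < q) (k : ℕ) : Integrable (fC q k) :=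
  (gI_integrable hq k).ofReal

lemma fC_locInt {q : ℝ} (hq : 0 < q) (k : ℕ) :
    LocallyIntegrableOn (fC q k) (Set.Ioi 0) :=
  ((fC_integrable hq k).locallyIntegrable).locallyIntegrableOn _

lemma fC_top (q : ℝ) (k : ℕ) (a : ℝ) : fC q k =O[atTop] fun t : ℝ => t ^ (-a) := by
  have hev : fC q k =ᶠ[atTop] (fun _ => 0) := by
    filter_upwards [eventually_ge_atTop (1:ℝ)] with t ht
    have : t ∉ Set.Ioo (0:ℝ) 1 := fun h => absurd h.2 (not_lt.2 ht)
    simp [fC, gI, Set.indicator_of_notMem this]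
  exact hev.trans_isBigO (isBigO_zero _ _)

lemma fC_bot {q : ℝ} (hq : 0 < q) : ∀ (k : ℕ) {e : ℝ}, 0 < e →
    fC q k =O[nhdsWithin 0 (Set.Ioi 0)] fun t : ℝ => t ^ (-e) := by
  intro k
  induction k with
  | zero =>
    intro e he
    rw [isBigO_iff]
    refine ⟨max 1 ((2:ℝ) ^ (1 - q)), ?_⟩
    filter_upwards [Ioo_mem_nhdsGT_of_mem (by norm_num : (0:ℝ) ∈ Set.Ico (0:ℝ) (1/2))]
      with t ht
    have ht0 := ht.1
    have ht2 := ht.2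
    have htIoo : t ∈ Set.Ioo (0:ℝ) 1 := ⟨ht0, by linarith⟩
    have ht1 : (0:ℝ) < 1 - t := by linarith
    have hnorm : ‖fC q 0 t‖ = (1 - t) ^ (q - 1) := by
      simp only [fC, gI, Set.indicator_of_mem htIoo, pow_zero, one_mul, Complex.norm_real]
      exact Real.norm_of_nonneg (le_of_lt (Real.rpow_pos_of_pos ht1 _))
    rw [hnorm]
    have hrb : (1 - t) ^ (q - 1) ≤ max 1 ((2:ℝ) ^ (1 - q)) := by
      rcases le_or_gt 1 q with h | h
      · exact le_trans (Real.rpow_le_one (by linarith) (by linarith) (by linarith))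
          (le_max_left _ _)
      · refine le_trans ?_ (le_max_right _ _)
        have h12 : (1/2 : ℝ) ≤ 1 - t := by linarith
        have := Real.rpow_le_rpow_of_nonpos (by norm_num : (0:ℝ) < 1/2) h12
          (by linarith : q - 1 ≤ 0)
        calc (1 - t) ^ (q - 1) ≤ (1/2 : ℝ) ^ (q - 1) := this
          _ = (2:ℝ) ^ (1 - q) := by
            rw [one_div, ← Real.rpow_neg_one (2:ℝ),
              ← Real.rpow_mul (by norm_num : (0:ℝ) ≤ 2)]
            ring_nf
    have hpow : (1:ℝ) ≤ ‖t ^ (-e)‖ := by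
      rw [Real.norm_of_nonneg (Real.rpow_nonneg ht0.le _)]
      calc (1:ℝ) = t ^ (0:ℝ) := (Real.rpow_zero t).symm
        _ ≤ t ^ (-e) := Real.rpow_le_rpow_of_exponent_ge ht0 (by linarith) (by linarith)
    calc (1 - t) ^ (q - 1) ≤ max 1 ((2:ℝ) ^ (1 - q)) := hrb
      _ ≤ max 1 ((2:ℝ) ^ (1 - q)) * ‖t ^ (-e)‖ := by
          nlinarith [le_max_left (1:ℝ) ((2:ℝ) ^ (1 - q)), hpow]
  | succ k ih =>
    intro e he
    have := isBigO_rpow_zero_log_smul (by linarith : e/2 < e) (ih (by positivity : (0:ℝ) < e/2))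
    rwa [fC_succ] at this

lemma mellin_fC_eq (q : ℝ) (k : ℕ) (σ : ℝ) :
    mellin (fC q k) (σ : ℂ) = ((Kint q k σ : ℝ) : ℂ) := by
  rw [mellin]
  have h1 : ∀ t ∈ Set.Ioi (0:ℝ),
      (t : ℂ) ^ ((σ:ℂ) - 1) • fC q k t = ((t ^ (σ - 1) * gI q k t : ℝ) : ℂ) := by
    intro t ht
    have ht0 : (0:ℝ) < t := ht
    rw [smul_eq_mul, fC]
    have : ((σ:ℂ) - 1) = ((σ - 1 : ℝ) : ℂ) := by push_cast; ring
    rw [this, ← Complex.ofReal_cpow ht0.le, ← Complex.ofReal_mul]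
  have h2 : ∀ t ∈ Set.Ioi (0:ℝ),
      t ^ (σ - 1) * gI q k t =
        Set.indicator (Set.Ioo 0 1)
          (fun t => (Real.log t) ^ k * t ^ (σ - 1) * (1 - t) ^ (q - 1)) t := by
    intro t ht
    by_cases h : t ∈ Set.Ioo (0:ℝ) 1
    · rw [gI, Set.indicator_of_mem h, Set.indicator_of_mem h]; ring
    · rw [gI, Set.indicator_of_notMem h, Set.indicator_of_notMem h, mul_zero]
  have hK : ∫ t in Set.Ioi (0:ℝ), t ^ (σ - 1) * gI q k t = Kint q k σ := by
    rw [setIntegral_congr_fun measurableSet_Ioi h2, setIntegral_indicator measurableSet_Ioo,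
      Set.inter_eq_right.mpr (fun t ht => ht.1), Kint]
  rw [setIntegral_congr_fun measurableSet_Ioi h1]
  exact integral_ofReal.trans (congrArg Complex.ofReal hK)

lemma hasDerivKint {q : ℝ} (hq : 0 < q) (k : ℕ) {σ : ℝ} (hσ : 0 < σ) :
    HasDerivAt (Kint q k) (Kint q (k + 1) σ) σ := by
  have hd := (mellin_hasDerivAt_of_isBigO_rpow (E := ℂ) (a := σ + 1) (b := σ / 2)
    (f := fC q k) (s := (σ : ℂ)) (fC_locInt hq k) (fC_top q k (σ + 1))
    (by rw [Complex.ofReal_re]; linarith)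
    (fC_bot hq k (by positivity)) (by rw [Complex.ofReal_re]; linarith)).2
  rw [fC_succ] at hd
  have hr := hd.real_of_complex
  simp only [mellin_fC_eq, Complex.ofReal_re] at hr
  exact hr

lemma Kint_zero {q : ℝ} (hq : 0 < q) {σ : ℝ} (hσ : 0 < σ) :
    Kint q 0 σ = Real.Gamma σ * Real.Gamma q / Real.Gamma (σ + q) := by
  have hB := Complex.Gamma_mul_Gamma_eq_betaIntegral (s := (σ:ℂ)) (t := (q:ℂ))
    (by simpa using hσ) (by simpa using hq)
  have hbeta : Complex.betaIntegral (σ:ℂ) (q:ℂ) = ((Kint q 0 σ : ℝ) : ℂ) := by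
    rw [Complex.betaIntegral, intervalIntegral.integral_of_le zero_le_one,
      integral_Ioc_eq_integral_Ioo]
    have h1 : ∀ t ∈ Set.Ioo (0:ℝ) 1,
        (t : ℂ) ^ ((σ:ℂ) - 1) * ((1:ℂ) - t) ^ ((q:ℂ) - 1)
          = (((Real.log t) ^ 0 * t ^ (σ - 1) * (1 - t) ^ (q - 1) : ℝ) : ℂ) := by
      intro t ht
      have ht1 : (0:ℝ) < 1 - t := by linarith [ht.2]
      have e1 : ((σ:ℂ) - 1) = ((σ - 1 : ℝ) : ℂ) := by push_cast; ring
      have e2 : ((q:ℂ) - 1) = ((q - 1 : ℝ) : ℂ) := by push_cast; ring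
      have e3 : ((1:ℂ) - (t:ℂ)) = ((1 - t : ℝ) : ℂ) := by push_cast; ring
      rw [e1, e2, e3, ← Complex.ofReal_cpow ht.1.le, ← Complex.ofReal_cpow ht1.le,
        ← Complex.ofReal_mul]
      norm_cast
      rw [pow_zero, one_mul]
    rw [setIntegral_congr_fun measurableSet_Ioo h1]
    exact integral_ofReal
  rw [hbeta, Complex.Gamma_ofReal, Complex.Gamma_ofReal, ← Complex.ofReal_add,
    Complex.Gamma_ofReal, ← Complex.ofReal_mul, ← Complex.ofReal_mul] at hB
  have hreal : Real.Gamma σ * Real.Gamma q = Real.Gamma (σ + q) * Kint q 0 σ := by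
    exact_mod_cast hB
  have hpos : (0:ℝ) < Real.Gamma (σ + q) := Real.Gamma_pos_of_pos (by linarith)
  field_simp [hpos.ne'] at hreal ⊢
  linarith [hreal]

lemma Kint_zero_pos {q : ℝ} (hq : 0 < q) {σ : ℝ} (hσ : 0 < σ) : 0 < Kint q 0 σ := by
  rw [Kint_zero hq hσ]
  have h1 := Real.Gamma_pos_of_pos hσ
  have h2 := Real.Gamma_pos_of_pos hq
  have h3 := Real.Gamma_pos_of_pos (by linarith : (0:ℝ) < σ + q)
  positivity

lemma analyticAt_realGamma {x : ℝ} (hx : 0 < x) : AnalyticAt ℝ Real.Gamma x := by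
  have hopen : IsOpen {s : ℂ | 0 < s.re} := isOpen_lt continuous_const Complex.continuous_re
  have hG : DifferentiableOn ℂ Complex.Gamma {s : ℂ | 0 < s.re} := by
    intro s hs
    refine (Complex.differentiableAt_Gamma s fun m => ?_).differentiableWithinAt
    intro h
    rw [h] at hs
    simp only [Set.mem_setOf_eq, Complex.neg_re, Complex.natCast_re] at hs
    have : (0:ℝ) ≤ (m:ℝ) := Nat.cast_nonneg m
    linarith
  have hA : AnalyticAt ℂ Complex.Gamma (x : ℂ) :=
    hG.analyticAt (hopen.mem_nhds (by simpa using hx))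
  have hcomp : AnalyticAt ℝ (fun y : ℝ => (Complex.Gamma (y : ℂ)).re) x :=
    (Complex.reCLM.analyticAt _).comp
      ((hA.restrictScalars).comp (Complex.ofRealCLM.analyticAt x))
  have : (fun y : ℝ => (Complex.Gamma (y : ℂ)).re) = Real.Gamma := by
    funext y; rw [Complex.Gamma_ofReal, Complex.ofReal_re]
  rwa [this] at hcomp

lemma logGamma_contDiffOn :
    ContDiffOn ℝ 3 (fun y => Real.log (Real.Gamma y)) (Set.Ioi 0) := by
  intro x hx
  have hx0 : (0:ℝ) < x := hx
  exact (((analyticAt_realGamma hx0).contDiffAt).log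
    (Real.Gamma_pos_of_pos hx0).ne').contDiffWithinAt

lemma logGamma_diffAt {x : ℝ} (hx : 0 < x) :
    DifferentiableAt ℝ (fun y => Real.log (Real.Gamma y)) x := by
  have h := (logGamma_contDiffOn.differentiableOn
    (by norm_num)).differentiableAt
    (Ioi_mem_nhds hx)
  exact h

lemma digamma_diffAt {x : ℝ} (hx : 0 < x) : DifferentiableAt ℝ digamma x := by
  have hD : ContDiffOn ℝ 1 (deriv (fun y => Real.log (Real.Gamma y))) (Set.Ioi 0) :=
    logGamma_contDiffOn.deriv_of_isOpen isOpen_Ioi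
      (by norm_num)
  have := (hD.differentiableOn one_ne_zero).differentiableAt (Ioi_mem_nhds hx)
  exact this

lemma hasDerivAt_logGamma {x : ℝ} (hx : 0 < x) :
    HasDerivAt (fun y => Real.log (Real.Gamma y)) (digamma x) x :=
  (logGamma_diffAt hx).hasDerivAt

lemma ratio_eq {q : ℝ} (hq : 0 < q) {σ : ℝ} (hσ : 0 < σ) :
    Kint q 1 σ / Kint q 0 σ = digamma σ - digamma (σ + q) := by
  have hK0 : HasDerivAt (Kint q 0) (Kint q 1 σ) σ := hasDerivKint hq 0 hσ
  have hpos := Kint_zero_pos hq hσ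
  have hlog : HasDerivAt (fun s => Real.log (Kint q 0 s)) (Kint q 1 σ / Kint q 0 σ) σ :=
    hK0.log hpos.ne'
  have hEq : (fun s => Real.log (Kint q 0 s)) =ᶠ[nhds σ]
      (fun s => Real.log (Real.Gamma s) + Real.log (Real.Gamma q)
        - Real.log (Real.Gamma (s + q))) := by
    filter_upwards [Ioi_mem_nhds hσ] with s hs
    have hs0 : (0:ℝ) < s := hs
    rw [Kint_zero hq hs0, Real.log_div (by positivity) (Real.Gamma_pos_of_pos (by linarith)).ne',
      Real.log_mul (Real.Gamma_pos_of_pos hs0).ne' (Real.Gamma_pos_of_pos hq).ne']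
  have d2 : HasDerivAt (fun s => Real.log (Real.Gamma (s + q))) (digamma (σ + q)) σ := by
    have h := (hasDerivAt_logGamma (by linarith : (0:ℝ) < σ + q)).comp σ
      ((hasDerivAt_id σ).add_const q)
    simpa [Function.comp_def] using h
  have d3 : HasDerivAt (fun s => Real.log (Real.Gamma s) + Real.log (Real.Gamma q)
      - Real.log (Real.Gamma (s + q))) (digamma σ - digamma (σ + q)) σ :=
    ((hasDerivAt_logGamma hσ).add_const _).sub d2
  calc Kint q 1 σ / Kint q 0 σ = deriv (fun s => Real.log (Kint q 0 s)) σ := hlog.deriv.symm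
    _ = deriv (fun s => Real.log (Real.Gamma s) + Real.log (Real.Gamma q)
        - Real.log (Real.Gamma (s + q))) σ := hEq.deriv_eq
    _ = digamma σ - digamma (σ + q) := d3.deriv

lemma main_deriv {q : ℝ} (hq : 0 < q) {p : ℝ} (hp : 0 < p) :
    (Kint q 2 p * Kint q 0 p - (Kint q 1 p) ^ 2) / (Kint q 0 p) ^ 2
      = trigamma p - trigamma (p + q) := by
  have hpos := Kint_zero_pos hq hp
  have hR : HasDerivAt (fun σ => Kint q 1 σ / Kint q 0 σ)
      ((Kint q 2 p * Kint q 0 p - Kint q 1 p * Kint q 1 p) / (Kint q 0 p) ^ 2) p :=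
    (hasDerivKint hq 1 hp).div (hasDerivKint hq 0 hp) hpos.ne'
  have hEq2 : (fun σ => Kint q 1 σ / Kint q 0 σ) =ᶠ[nhds p]
      (fun σ => digamma σ - digamma (σ + q)) := by
    filter_upwards [Ioi_mem_nhds hp] with s hs
    exact ratio_eq hq hs
  have hdiff2 : DifferentiableAt ℝ (fun σ => digamma (σ + q)) p :=
    (digamma_diffAt (by linarith : (0:ℝ) < p + q)).comp p
      (differentiableAt_id.add_const q)
  have hder : deriv (fun σ => digamma σ - digamma (σ + q)) p
      = trigamma p - trigamma (p + q) := by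
    rw [deriv_fun_sub (digamma_diffAt hp) hdiff2, deriv_comp_add_const]
    rfl
  calc (Kint q 2 p * Kint q 0 p - (Kint q 1 p) ^ 2) / (Kint q 0 p) ^ 2
      = (Kint q 2 p * Kint q 0 p - Kint q 1 p * Kint q 1 p) / (Kint q 0 p) ^ 2 := by ring_nf
    _ = deriv (fun σ => Kint q 1 σ / Kint q 0 σ) p := hR.deriv.symm
    _ = deriv (fun σ => digamma σ - digamma (σ + q)) p := hEq2.deriv_eq
    _ = trigamma p - trigamma (p + q) := hder

lemma image_phi {a c : ℝ} (ha : 0 < a) (hc : 0 < c) :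
    (fun t : ℝ => c / a * t⁻¹ - c / a) '' Set.Ioo 0 1 = Set.Ioi 0 := by
  have hca : 0 < c / a := div_pos hc ha
  ext y
  constructor
  · rintro ⟨t, ht, rfl⟩
    have h1 : 1 < t⁻¹ := (one_lt_inv₀ ht.1).2 ht.2
    have : 0 < c / a * t⁻¹ - c / a := by nlinarith
    simpa using this
  · intro hy
    have hy0 : (0:ℝ) < y := hy
    refine ⟨c / (a * y + c), ⟨by positivity, ?_⟩, ?_⟩
    · rw [div_lt_one (by positivity)]
      nlinarith
    · have hne : a * y + c ≠ 0 := by positivity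
      field_simp
      ring
lemma inj_phi {a c : ℝ} (ha : 0 < a) (hc : 0 < c) :
    Set.InjOn (fun t : ℝ => c / a * t⁻¹ - c / a) (Set.Ioo 0 1) := by
  intro t ht t' ht' h
  have hca : c / a ≠ 0 := (div_pos hc ha).ne'
  simp only [sub_left_inj] at h
  have := mul_left_cancel₀ hca h
  exact inv_injective this

lemma transform {a c : ℝ} (ha : 0 < a) (hc : 0 < c) (k : ℕ) :
    (∫ x in Set.Ioi (0:ℝ), (Real.log (1 + a * x / c)) ^ k * fDensity a c x)
      = (-1:ℝ) ^ k * (Real.Gamma ((a + c) / 2) / (Real.Gamma (a / 2) * Real.Gamma (c / 2)))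
          * Kint (a / 2) k (c / 2) := by
  set φ : ℝ → ℝ := fun t => c / a * t⁻¹ - c / a with hφ
  have hca : 0 < c / a := div_pos hc ha
  have hderiv : ∀ t ∈ Set.Ioo (0:ℝ) 1,
      HasDerivWithinAt φ (c / a * -(t ^ 2)⁻¹) (Set.Ioo 0 1) t := fun t ht =>
    (((hasDerivAt_inv ht.1.ne').const_mul (c / a)).sub_const (c / a)).hasDerivWithinAt
  rw [← image_phi ha hc,
    integral_image_eq_integral_abs_deriv_smul measurableSet_Ioo hderiv (inj_phi ha hc)]
  rw [show ((-1:ℝ) ^ k * (Real.Gamma ((a + c) / 2) / (Real.Gamma (a / 2) * Real.Gamma (c / 2)))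
          * Kint (a / 2) k (c / 2))
      = ∫ t in Set.Ioo (0:ℝ) 1,
          (-1:ℝ) ^ k * (Real.Gamma ((a + c) / 2) / (Real.Gamma (a / 2) * Real.Gamma (c / 2)))
            * ((Real.log t) ^ k * t ^ (c / 2 - 1) * (1 - t) ^ (a / 2 - 1)) from by
      rw [integral_const_mul, Kint]]
  refine setIntegral_congr_fun measurableSet_Ioo (fun t ht => ?_)
  have ht0 : (0:ℝ) < t := ht.1
  have ht1 : t < 1 := ht.2
  have htt : (0:ℝ) < 1 - t := by linarith
  have hinv : 1 + a * φ t / c = t⁻¹ := by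
    rw [hφ]; field_simp; ring
  have hyeq : φ t = c / a * ((1 - t) * t⁻¹) := by
    rw [hφ]; field_simp
  have hypos : 0 < φ t := by rw [hyeq]; positivity
  -- rpow manipulations
  have hA : (φ t) ^ (a / 2 - 1)
      = (c / a) ^ (a / 2 - 1) * ((1 - t) ^ (a / 2 - 1) * t ^ (1 - a / 2)) := by
    rw [hyeq, Real.mul_rpow hca.le (by positivity), Real.mul_rpow htt.le (by positivity),
      ← Real.rpow_neg_one t, ← Real.rpow_mul ht0.le]
    norm_num
  have hB : (t⁻¹ : ℝ) ^ (-((a + c) / 2)) = t ^ ((a + c) / 2) := by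
    rw [← Real.rpow_neg_one t, ← Real.rpow_mul ht0.le]
    norm_num
  have habs : |c / a * -(t ^ 2)⁻¹| = c / a * t ^ (-2 : ℝ) := by
    rw [abs_mul, abs_of_pos hca, abs_neg, abs_of_pos (by positivity : (0:ℝ) < (t ^ 2)⁻¹),
      ← Real.rpow_natCast t 2, ← Real.rpow_neg ht0.le]
    norm_num
  have hsplit : t ^ (c / 2 - 1) = t ^ (-2:ℝ) * (t ^ (1 - a / 2) * t ^ ((a + c) / 2)) := by
    rw [← Real.rpow_add ht0, ← Real.rpow_add ht0]
    congr 1; ring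
  have e1 : (c / a) ^ (1:ℝ) * (c / a) ^ (a / 2 - 1) = (c / a) ^ (a / 2) := by
    rw [← Real.rpow_add hca]; congr 1; ring
  have e2 : (a / c) ^ (a / 2) * (c / a) ^ (a / 2) = 1 := by
    rw [← Real.mul_rpow (by positivity) hca.le,
      show a / c * (c / a) = 1 from by field_simp, Real.one_rpow]
  have hscal : c / a * ((a / c) ^ (a / 2) * (c / a) ^ (a / 2 - 1)) = 1 := by
    calc c / a * ((a / c) ^ (a / 2) * (c / a) ^ (a / 2 - 1))
        = (a / c) ^ (a / 2) * ((c / a) ^ (1:ℝ) * (c / a) ^ (a / 2 - 1)) := by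
          rw [Real.rpow_one]; ring
      _ = (a / c) ^ (a / 2) * (c / a) ^ (a / 2) := by rw [e1]
      _ = 1 := e2
  have hlog : Real.log (1 + a * φ t / c) = -Real.log t := by rw [hinv, Real.log_inv]
  have hnegpow : (-Real.log t) ^ k = (-1:ℝ) ^ k * (Real.log t) ^ k := by
    rw [neg_pow]
  rw [smul_eq_mul, hlog, hnegpow, fDensity, hinv, hA, hB, habs]
  calc (c / a * t ^ (-2:ℝ)) *
        ((-1:ℝ) ^ k * Real.log t ^ k *
          (Real.Gamma ((a + c) / 2) / (Real.Gamma (a / 2) * Real.Gamma (c / 2)) *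
              (a / c) ^ (a / 2) *
              ((c / a) ^ (a / 2 - 1) * ((1 - t) ^ (a / 2 - 1) * t ^ (1 - a / 2))) *
            t ^ ((a + c) / 2)))
      = (c / a * ((a / c) ^ (a / 2) * (c / a) ^ (a / 2 - 1))) *
          ((-1:ℝ) ^ k * (Real.Gamma ((a + c) / 2) / (Real.Gamma (a / 2) * Real.Gamma (c / 2)))
            * (Real.log t ^ k * (t ^ (-2:ℝ) * (t ^ (1 - a / 2) * t ^ ((a + c) / 2)))
                * (1 - t) ^ (a / 2 - 1))) := by ring
    _ = (-1:ℝ) ^ k * (Real.Gamma ((a + c) / 2) / (Real.Gamma (a / 2) * Real.Gamma (c / 2)))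
          * (Real.log t ^ k * t ^ (c / 2 - 1) * (1 - t) ^ (a / 2 - 1)) := by
        rw [hscal, hsplit]; ring

theorem stmt_7 (b N : ℕ) (hb : 1 ≤ b) (hN : b + 2 ≤ N) :
    (∫ x in Set.Ioi (0 : ℝ),
        ((N : ℝ) * Real.log (1 + (b : ℝ) * x / ((N : ℝ) - b - 1))) ^ 2 *
          fDensity (b : ℝ) ((N : ℝ) - b - 1) x)
      - (∫ x in Set.Ioi (0 : ℝ),
          (N : ℝ) * Real.log (1 + (b : ℝ) * x / ((N : ℝ) - b - 1)) *
            fDensity (b : ℝ) ((N : ℝ) - b - 1) x) ^ 2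
      = (N : ℝ) ^ 2 *
          (trigamma (((N : ℝ) - b - 1) / 2) - trigamma (((N : ℝ) - 1) / 2)) := by
  have hb1 : (1:ℝ) ≤ (b:ℝ) := by exact_mod_cast hb
  have hN2 : ((b:ℝ) + 2) ≤ (N:ℝ) := by exact_mod_cast hN
  set a : ℝ := (b:ℝ) with hadef
  set c : ℝ := (N:ℝ) - a - 1 with hcdef
  have ha : 0 < a := by linarith
  have hc : 0 < c := by rw [hcdef]; linarith
  have hq : 0 < a / 2 := by linarith
  have hp : 0 < c / 2 := by linarith
  have h2 := transform ha hc 2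
  have h1 := transform ha hc 1
  have h0pos := Kint_zero_pos hq hp
  have hgq := Real.Gamma_pos_of_pos hq
  have hgp := Real.Gamma_pos_of_pos hp
  have hgpq := Real.Gamma_pos_of_pos (by linarith : (0:ℝ) < c / 2 + a / 2)
  have hC : Real.Gamma ((a + c) / 2) / (Real.Gamma (a / 2) * Real.Gamma (c / 2))
      = (Kint (a / 2) 0 (c / 2))⁻¹ := by
    rw [show (a + c) / 2 = c / 2 + a / 2 from by ring, Kint_zero hq hp, inv_div]
    rw [mul_comm (Real.Gamma (c/2))]
  have e2 : ∀ x : ℝ, ((N:ℝ) * Real.log (1 + a * x / c)) ^ 2 * fDensity a c x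
      = (N:ℝ) ^ 2 * ((Real.log (1 + a * x / c)) ^ 2 * fDensity a c x) := fun x => by ring
  have e1 : ∀ x : ℝ, (N:ℝ) * Real.log (1 + a * x / c) * fDensity a c x
      = (N:ℝ) * ((Real.log (1 + a * x / c)) ^ 1 * fDensity a c x) := fun x => by ring
  simp_rw [e2, e1]
  rw [integral_const_mul, integral_const_mul, h1, h2]
  rw [show ((N:ℝ) - 1) / 2 = c / 2 + a / 2 from by rw [hcdef]; ring]
  rw [show ((N:ℝ) - (b:ℝ) - 1) / 2 = c / 2 from by rw [hcdef]]
  rw [← main_deriv hq hp, hC]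
  field_simp
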